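/- With F, p_k, ‖·‖_k as defined, if a sequence φ_j ∈ F is Cauchy with respect to all seminorms ‖·‖_k and p_k, then there is φ ∈ F with φ_j → φ in all these seminorms. -/

import Mathlib

open Filter Set

/-- sup_{s ∈ [0, kτ₁]} |b_i φ(s − τ_i)|  (τ₁ = τ 0 with ℕ-indexing). -/
noncomputable def pTerm (b τ : ℕ → ℝ) (φ : ℝ → ℝ) (k i : ℕ) : ℝ :=
  ⨆ s : Set.Icc (0:ℝ) ((k : ℝ) * τ 0), |b i * φ ((s : ℝ) - τ i)|

/-- The seminorm p_k(φ) = Σ_{i ≥ n(k)} sup_{s ∈ [0,kτ₁]} |b_i φ(s − τ_i)|. -/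
noncomputable def pSemi (b τ : ℕ → ℝ) (n : ℕ → ℕ) (φ : ℝ → ℝ) (k : ℕ) : ℝ :=
  ∑' i : ℕ, pTerm b τ φ k (n k + i)

/-- The seminorm ‖φ‖_k = sup_{θ ∈ [−k,0]} |φ(θ)|. -/
noncomputable def normSemi (φ : ℝ → ℝ) (k : ℕ) : ℝ :=
  ⨆ θ : Set.Icc (-(k:ℝ)) (0:ℝ), |φ (θ : ℝ)|

/-- n(k) is the smallest natural number such that τ_i ≥ kτ₁ for all i ≥ n(k). -/
def nSpec (τ : ℕ → ℝ) (n : ℕ → ℕ) : Prop :=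
  ∀ k : ℕ, (∀ i, n k ≤ i → (k : ℝ) * τ 0 ≤ τ i) ∧
    ∀ m : ℕ, (∀ i, m ≤ i → (k : ℝ) * τ 0 ≤ τ i) → n k ≤ m

/-- Membership in the Fréchet space F: φ is continuous on (-∞,0] and
p_k(φ) < ∞ (i.e. the defining series is summable) for every k. -/
def memF (b τ : ℕ → ℝ) (n : ℕ → ℕ) (φ : ℝ → ℝ) : Prop :=
  ContinuousOn φ (Set.Iic 0) ∧
    ∀ k : ℕ, Summable fun i => pTerm b τ φ k (n k + i)

lemma pTerm_nonneg (b τ : ℕ → ℝ) (f : ℝ → ℝ) (k m : ℕ) : 0 ≤ pTerm b τ f k m :=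
  Real.iSup_nonneg fun _ => abs_nonneg _

lemma icc_nonempty (τ : ℕ → ℝ) (hτ0 : 0 < τ 0) (k : ℕ) :
    Nonempty (Set.Icc (0:ℝ) ((k:ℝ) * τ 0)) :=
  ⟨⟨0, le_refl 0, mul_nonneg (Nat.cast_nonneg k) hτ0.le⟩⟩

lemma pTerm_le (b τ : ℕ → ℝ) (f : ℝ → ℝ) (k m : ℕ) (hτ0 : 0 < τ 0) {c : ℝ}
    (h : ∀ s : Set.Icc (0:ℝ) ((k:ℝ) * τ 0), |b m * f ((s:ℝ) - τ m)| ≤ c) :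
    pTerm b τ f k m ≤ c := by
  haveI := icc_nonempty τ hτ0 k
  exact ciSup_le h

lemma pTerm_bddAbove (b τ : ℕ → ℝ) (k m : ℕ) {f : ℝ → ℝ}
    (hf : ContinuousOn f (Set.Iic 0)) (h : (k:ℝ) * τ 0 ≤ τ m) :
    BddAbove (Set.range fun s : Set.Icc (0:ℝ) ((k:ℝ) * τ 0) => |b m * f ((s:ℝ) - τ m)|) := by
  have hmaps : Set.MapsTo (fun s : ℝ => s - τ m) (Set.Icc 0 ((k:ℝ) * τ 0)) (Set.Iic 0) := by
    intro s hs
    simp only [Set.mem_Iic]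
    linarith [hs.2]
  have hc : ContinuousOn (fun s : ℝ => |b m * f (s - τ m)|) (Set.Icc 0 ((k:ℝ) * τ 0)) :=
    (continuousOn_const.mul (hf.comp (continuous_id.sub continuous_const).continuousOn hmaps)).abs
  have := (isCompact_Icc.image_of_continuousOn hc).bddAbove
  rwa [Set.image_eq_range] at this

lemma pTerm_add_le (b τ : ℕ → ℝ) (k m : ℕ) (f g : ℝ → ℝ) (hτ0 : 0 < τ 0)
    (hf : BddAbove (Set.range fun s : Set.Icc (0:ℝ) ((k:ℝ) * τ 0) => |b m * f ((s:ℝ) - τ m)|))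
    (hg : BddAbove (Set.range fun s : Set.Icc (0:ℝ) ((k:ℝ) * τ 0) => |b m * g ((s:ℝ) - τ m)|)) :
    pTerm b τ (fun x => f x + g x) k m ≤ pTerm b τ f k m + pTerm b τ g k m := by
  apply pTerm_le b τ _ k m hτ0
  intro s
  have h1 : |b m * f ((s:ℝ) - τ m)| ≤ pTerm b τ f k m := le_ciSup hf s
  have h2 : |b m * g ((s:ℝ) - τ m)| ≤ pTerm b τ g k m := le_ciSup hg s
  calc |b m * (f ((s:ℝ) - τ m) + g ((s:ℝ) - τ m))|
      = |b m * f ((s:ℝ) - τ m) + b m * g ((s:ℝ) - τ m)| := by ring_nf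
    _ ≤ |b m * f ((s:ℝ) - τ m)| + |b m * g ((s:ℝ) - τ m)| := abs_add_le _ _
    _ ≤ _ := add_le_add h1 h2

lemma pTerm_sub_le (b τ : ℕ → ℝ) (k m : ℕ) (f g : ℝ → ℝ) (hτ0 : 0 < τ 0)
    (hf : BddAbove (Set.range fun s : Set.Icc (0:ℝ) ((k:ℝ) * τ 0) => |b m * f ((s:ℝ) - τ m)|))
    (hg : BddAbove (Set.range fun s : Set.Icc (0:ℝ) ((k:ℝ) * τ 0) => |b m * g ((s:ℝ) - τ m)|)) :
    pTerm b τ (fun x => f x - g x) k m ≤ pTerm b τ f k m + pTerm b τ g k m := by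
  apply pTerm_le b τ _ k m hτ0
  intro s
  have h1 : |b m * f ((s:ℝ) - τ m)| ≤ pTerm b τ f k m := le_ciSup hf s
  have h2 : |b m * g ((s:ℝ) - τ m)| ≤ pTerm b τ g k m := le_ciSup hg s
  calc |b m * (f ((s:ℝ) - τ m) - g ((s:ℝ) - τ m))|
      = |b m * f ((s:ℝ) - τ m) - b m * g ((s:ℝ) - τ m)| := by ring_nf
    _ ≤ |b m * f ((s:ℝ) - τ m)| + |b m * g ((s:ℝ) - τ m)| := by
        rw [sub_eq_add_neg]
        exact (abs_add_le _ _).trans (by rw [abs_neg])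
    _ ≤ _ := add_le_add h1 h2

lemma norm_bddAbove (k : ℕ) {f : ℝ → ℝ} (hf : ContinuousOn f (Set.Iic 0)) :
    BddAbove (Set.range fun θ : Set.Icc (-(k:ℝ)) (0:ℝ) => |f (θ:ℝ)|) := by
  have hc : ContinuousOn (fun θ : ℝ => |f θ|) (Set.Icc (-(k:ℝ)) 0) :=
    (hf.mono fun x hx => hx.2).abs
  have := (isCompact_Icc.image_of_continuousOn hc).bddAbove
  rwa [Set.image_eq_range] at this

/-- If a sequence φ_j ∈ F is Cauchy with respect to all the
seminorms ‖·‖_k and p_k, then there is φ ∈ F with φ_j → φ in all these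
seminorms. -/
theorem cauchy_seq_in_F_converges (b τ : ℕ → ℝ) (n : ℕ → ℕ)
    (hτ : StrictMono τ) (hτpos : ∀ i, 0 < τ i)
    (hτtop : Tendsto τ atTop atTop) (hn : nSpec τ n)
    (φ : ℕ → ℝ → ℝ) (hmem : ∀ j, memF b τ n (φ j))
    (hcauchyNorm : ∀ k : ℕ, ∀ ε > (0:ℝ), ∃ N : ℕ, ∀ j ≥ N, ∀ j' ≥ N,
      normSemi (fun θ => φ j θ - φ j' θ) k ≤ ε)
    (hcauchyP : ∀ k : ℕ, ∀ ε > (0:ℝ), ∃ N : ℕ, ∀ j ≥ N, ∀ j' ≥ N,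
      pSemi b τ n (fun θ => φ j θ - φ j' θ) k ≤ ε) :
    ∃ ψ : ℝ → ℝ, memF b τ n ψ ∧
      (∀ k : ℕ, Tendsto (fun j => normSemi (fun θ => φ j θ - ψ θ) k) atTop (nhds 0)) ∧
      (∀ k : ℕ, Tendsto (fun j => pSemi b τ n (fun θ => φ j θ - ψ θ) k) atTop (nhds 0)) := by
  have hτ0 : 0 < τ 0 := hτpos 0
  have hcontdiff : ∀ j j' : ℕ, ContinuousOn (fun θ => φ j θ - φ j' θ) (Set.Iic 0) :=
    fun j j' => (hmem j).1.sub (hmem j').1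
  -- pointwise bound by normSemi
  have hptnorm : ∀ (k : ℕ) (j j' : ℕ) (x : ℝ), x ∈ Set.Icc (-(k:ℝ)) (0:ℝ) →
      |φ j x - φ j' x| ≤ normSemi (fun θ => φ j θ - φ j' θ) k := by
    intro k j j' x hx
    exact le_ciSup (norm_bddAbove k (hcontdiff j j')) ⟨x, hx⟩
  -- pointwise convergence
  have hC : ∀ x : ℝ, x ≤ 0 → ∃ L, Tendsto (fun j => φ j x) atTop (nhds L) := by
    intro x hx
    apply cauchySeq_tendsto_of_complete
    rw [Metric.cauchySeq_iff]
    intro ε hε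
    obtain ⟨N, hN⟩ := hcauchyNorm ⌈-x⌉₊ (ε/2) (by linarith)
    refine ⟨N, fun j hj j' hj' => ?_⟩
    have hxmem : x ∈ Set.Icc (-((⌈-x⌉₊ : ℕ) : ℝ)) (0:ℝ) := by
      constructor
      · have := Nat.le_ceil (-x)
        linarith
      · exact hx
    have := (hptnorm ⌈-x⌉₊ j j' x hxmem).trans (hN j hj j' hj')
    rw [Real.dist_eq]
    linarith
  classical
  set ψ : ℝ → ℝ := fun x => if hx : x ≤ 0 then (hC x hx).choose else 0 with hψdef
  have htend : ∀ x : ℝ, x ≤ 0 → Tendsto (fun j => φ j x) atTop (nhds (ψ x)) := by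
    intro x hx
    have : ψ x = (hC x hx).choose := by rw [hψdef]; exact dif_pos hx
    rw [this]
    exact (hC x hx).choose_spec
  -- uniform approximation on compacts [-K, 0]
  have hunif : ∀ K : ℕ, ∀ δ > (0:ℝ), ∃ N : ℕ, ∀ j ≥ N, ∀ x ∈ Set.Icc (-(K:ℝ)) (0:ℝ),
      |φ j x - ψ x| ≤ δ := by
    intro K δ hδ
    obtain ⟨N, hN⟩ := hcauchyNorm K δ hδ
    refine ⟨N, fun j hj x hx => ?_⟩
    have hlim : Tendsto (fun j' => |φ j x - φ j' x|) atTop (nhds (|φ j x - ψ x|)) :=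
      (continuous_abs.tendsto _).comp (tendsto_const_nhds.sub (htend x hx.2))
    refine le_of_tendsto hlim ?_
    filter_upwards [eventually_ge_atTop N] with j' hj'
    exact (hptnorm K j j' x hx).trans (hN j hj j' hj')
  -- continuity of ψ on (-∞, 0]
  have hψcont : ContinuousOn ψ (Set.Iic 0) := by
    have hKcont : ∀ K : ℕ, ContinuousOn ψ (Set.Icc (-(K:ℝ)) 0) := by
      intro K
      have hu : TendstoUniformlyOn (fun j x => φ j x) ψ atTop (Set.Icc (-(K:ℝ)) 0) := by
        rw [Metric.tendstoUniformlyOn_iff]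
        intro ε hε
        obtain ⟨N, hN⟩ := hunif K (ε/2) (by linarith)
        filter_upwards [eventually_ge_atTop N] with j hj x hx
        rw [Real.dist_eq, abs_sub_comm]
        linarith [hN j hj x hx]
      exact hu.continuousOn (Frequently.of_forall fun j => (hmem j).1.mono fun x hx => hx.2)
    intro x hx
    set K : ℕ := ⌈-x⌉₊ + 1 with hK
    have hlt : -(K:ℝ) < x := by
      have := Nat.le_ceil (-x)
      have : -((⌈-x⌉₊ : ℝ)) ≤ x := by linarith
      push_cast [hK]
      linarith
    have hx' : x ∈ Set.Icc (-(K:ℝ)) 0 := ⟨hlt.le, hx⟩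
    have hcwa := (hKcont K) x hx'
    apply hcwa.mono_of_mem_nhdsWithin
    have h1 : Set.Ici (-(K:ℝ)) ∈ nhds x := Ici_mem_nhds hlt
    have h2 : Set.Ici (-(K:ℝ)) ∩ Set.Iic 0 ∈ nhdsWithin x (Set.Iic 0) :=
      Filter.inter_mem (mem_nhdsWithin_of_mem_nhds h1) self_mem_nhdsWithin
    rwa [Set.Ici_inter_Iic] at h2
  -- key facts for each k
  have hnk : ∀ k i : ℕ, (k:ℝ) * τ 0 ≤ τ (n k + i) := fun k i => (hn k).1 _ (Nat.le_add_right _ _)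
  have hsumdiff : ∀ (k : ℕ) (j j' : ℕ),
      Summable fun i => pTerm b τ (fun θ => φ j θ - φ j' θ) k (n k + i) := by
    intro k j j'
    apply Summable.of_nonneg_of_le (fun i => pTerm_nonneg _ _ _ _ _)
      (fun i => pTerm_sub_le b τ k (n k + i) _ _ hτ0
        (pTerm_bddAbove b τ k _ (hmem j).1 (hnk k i))
        (pTerm_bddAbove b τ k _ (hmem j').1 (hnk k i)))
    exact ((hmem j).2 k).add ((hmem j').2 k)
  -- key estimate
  have hkey : ∀ k : ℕ, ∀ ε > (0:ℝ), ∃ N : ℕ, ∀ j ≥ N, ∀ M : ℕ,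
      ∑ i ∈ Finset.range M, pTerm b τ (fun θ => φ j θ - ψ θ) k (n k + i) ≤ ε := by
    intro k ε hε
    obtain ⟨N, hN⟩ := hcauchyP k ε hε
    refine ⟨N, fun j hj M => ?_⟩
    apply le_of_forall_pos_le_add
    intro δ' hδ'
    set B : ℝ := ∑ i ∈ Finset.range M, |b (n k + i)| with hB
    have hBnn : 0 ≤ B := Finset.sum_nonneg fun i _ => abs_nonneg _
    set δ : ℝ := δ' / (B + 1) with hδdef
    have hδpos : 0 < δ := div_pos hδ' (by linarith)
    set K : ℕ := ⌈τ (n k + M)⌉₊ with hKdef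
    obtain ⟨N2, hN2⟩ := hunif K δ hδpos
    set j' : ℕ := max N N2 with hj'def
    have hj'N : j' ≥ N := le_max_left _ _
    have hj'N2 : j' ≥ N2 := le_max_right _ _
    -- termwise estimate
    have hterm : ∀ i ∈ Finset.range M,
        pTerm b τ (fun θ => φ j θ - ψ θ) k (n k + i) ≤
          pTerm b τ (fun θ => φ j θ - φ j' θ) k (n k + i) + |b (n k + i)| * δ := by
      intro i hi
      have hiM : i < M := Finset.mem_range.mp hi
      have heq : (fun θ => φ j θ - ψ θ) =
          fun θ => (φ j θ - φ j' θ) + (φ j' θ - ψ θ) := by funext θ; ring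
      rw [heq]
      have hb1 := pTerm_bddAbove b τ k (n k + i) (hcontdiff j j') (hnk k i)
      have hb2 := pTerm_bddAbove b τ k (n k + i) ((hmem j').1.sub hψcont) (hnk k i)
      refine (pTerm_add_le b τ k (n k + i) _ _ hτ0 hb1 hb2).trans ?_
      apply add_le_add_right
      apply pTerm_le b τ _ k (n k + i) hτ0
      intro s
      rw [abs_mul]
      apply mul_le_mul_of_nonneg_left _ (abs_nonneg _)
      apply hN2 j' hj'N2
      constructor
      · have h1 : τ (n k + i) ≤ τ (n k + M) := hτ.monotone (by omega)
        have h2 : τ (n k + M) ≤ (K:ℝ) := Nat.le_ceil _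
        have h3 : (0:ℝ) ≤ (s:ℝ) := s.2.1
        linarith
      · have := hnk k i
        have h3 : (s:ℝ) ≤ (k:ℝ) * τ 0 := s.2.2
        linarith
    calc ∑ i ∈ Finset.range M, pTerm b τ (fun θ => φ j θ - ψ θ) k (n k + i)
        ≤ ∑ i ∈ Finset.range M, (pTerm b τ (fun θ => φ j θ - φ j' θ) k (n k + i)
            + |b (n k + i)| * δ) := Finset.sum_le_sum hterm
      _ = (∑ i ∈ Finset.range M, pTerm b τ (fun θ => φ j θ - φ j' θ) k (n k + i))
            + B * δ := by rw [Finset.sum_add_distrib, ← Finset.sum_mul]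
      _ ≤ ε + δ' := by
          apply add_le_add
          · have hle : ∑ i ∈ Finset.range M,
                pTerm b τ (fun θ => φ j θ - φ j' θ) k (n k + i) ≤
                pSemi b τ n (fun θ => φ j θ - φ j' θ) k :=
              Summable.sum_le_tsum _ (fun i _ => pTerm_nonneg _ _ _ _ _) (hsumdiff k j j')
            exact hle.trans (hN j hj j' hj'N)
          · rw [hδdef]
            rw [div_eq_mul_inv]
            have : B * (δ' * (B + 1)⁻¹) = δ' * (B * (B + 1)⁻¹) := by ring
            rw [this]
            have h1 : B * (B + 1)⁻¹ ≤ 1 := by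
              rw [← div_eq_mul_inv, div_le_one (by linarith)]
              linarith
            nlinarith
  -- summability of the difference with ψ, and tail bound
  have hsumdiffψ : ∀ k j : ℕ,
      Summable fun i => pTerm b τ (fun θ => φ j θ - ψ θ) k (n k + i) := by
    intro k j
    obtain ⟨N, hN⟩ := hkey k 1 one_pos
    set j0 : ℕ := max j N with hj0
    have hsum0 : Summable fun i => pTerm b τ (fun θ => φ j0 θ - ψ θ) k (n k + i) :=
      summable_of_sum_range_le (fun i => pTerm_nonneg _ _ _ _ _)
        (fun M => hN j0 (le_max_right _ _) M)
    -- φ j - ψ = (φ j - φ j0) + (φ j0 - ψ)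
    refine Summable.of_nonneg_of_le (fun i => pTerm_nonneg _ _ _ _ _) ?_
      ((hsumdiff k j j0).add hsum0)
    · intro i
      have heq : (fun θ => φ j θ - ψ θ) =
          fun θ => (φ j θ - φ j0 θ) + (φ j0 θ - ψ θ) := by funext θ; ring
      rw [heq]
      exact pTerm_add_le b τ k (n k + i) _ _ hτ0
        (pTerm_bddAbove b τ k _ (hcontdiff j j0) (hnk k i))
        (pTerm_bddAbove b τ k _ ((hmem j0).1.sub hψcont) (hnk k i))
  -- summability for ψ itself
  have hψsum : ∀ k : ℕ, Summable fun i => pTerm b τ ψ k (n k + i) := by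
    intro k
    refine Summable.of_nonneg_of_le (fun i => pTerm_nonneg _ _ _ _ _) ?_
      (((hmem 0).2 k).add (hsumdiffψ k 0))
    · intro i
      have heq : ψ = fun θ => φ 0 θ - (φ 0 θ - ψ θ) := by funext θ; ring
      calc pTerm b τ ψ k (n k + i)
          = pTerm b τ (fun θ => φ 0 θ - (φ 0 θ - ψ θ)) k (n k + i) := by rw [← heq]
        _ ≤ _ := pTerm_sub_le b τ k (n k + i) _ _ hτ0
            (pTerm_bddAbove b τ k _ (hmem 0).1 (hnk k i))
            (pTerm_bddAbove b τ k _ ((hmem 0).1.sub hψcont) (hnk k i))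
  refine ⟨ψ, ⟨hψcont, hψsum⟩, ?_, ?_⟩
  · -- normSemi convergence
    intro k
    rw [Metric.tendsto_atTop]
    intro ε hε
    obtain ⟨N, hN⟩ := hunif k (ε/2) (by linarith)
    refine ⟨N, fun j hj => ?_⟩
    rw [Real.dist_eq, sub_zero]
    have hnn : 0 ≤ normSemi (fun θ => φ j θ - ψ θ) k :=
      Real.iSup_nonneg fun _ => abs_nonneg _
    rw [abs_of_nonneg hnn]
    have hle : normSemi (fun θ => φ j θ - ψ θ) k ≤ ε/2 := by
      haveI : Nonempty (Set.Icc (-(k:ℝ)) (0:ℝ)) :=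
        ⟨⟨0, by simp, le_refl 0⟩⟩
      apply ciSup_le
      intro θ
      exact hN j hj θ θ.2
    linarith
  · -- pSemi convergence
    intro k
    rw [Metric.tendsto_atTop]
    intro ε hε
    obtain ⟨N, hN⟩ := hkey k (ε/2) (by linarith)
    refine ⟨N, fun j hj => ?_⟩
    rw [Real.dist_eq, sub_zero]
    have hnn : 0 ≤ pSemi b τ n (fun θ => φ j θ - ψ θ) k :=
      tsum_nonneg fun i => pTerm_nonneg _ _ _ _ _
    rw [abs_of_nonneg hnn]
    have hle : pSemi b τ n (fun θ => φ j θ - ψ θ) k ≤ ε/2 :=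
      Summable.tsum_le_of_sum_range_le (hsumdiffψ k j) (hN j hj)
    linarith
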